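/- Let n ≥ 2, let 1 ≤ i < n, and let u ∈ ℝ. Then the n×n real matrix identity I + u·E_{n,i} = (I + (u/(1+u²))·E_{i,n}) · ŷ_{n,i}(u) · k̂_{n,i}(u) holds, and moreover k̂_{n,i}(u) is an orthogonal matrix (k̂_{n,i}(u)ᵀ · k̂_{n,i}(u) = I). -/

import Mathlib

/-- `ŷ_{n,i}(x)` (with 1-based row index `i` passed as `iv : Fin n` 0-based, and the
"last" index `m` corresponding to the 1-based index `n`): the diagonal matrix whose
`(i,i)` entry is `(1+x²)^{−1/2}`, whose `(n,n)` entry is `(1+x²)^{1/2}`, and whose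
other diagonal entries are 1. -/
noncomputable def yhat (n : ℕ) (i m : Fin n) (x : ℝ) : Matrix (Fin n) (Fin n) ℝ :=
  Matrix.diagonal fun j => if j = i then (Real.sqrt (1 + x ^ 2))⁻¹
    else if j = m then Real.sqrt (1 + x ^ 2) else 1

/-- `k̂_{n,i}(x)`: agrees with the identity except that its `(i,i)` and `(n,n)` entries
are `(1+x²)^{−1/2}`, its `(i,n)` entry is `−x(1+x²)^{−1/2}`, and its `(n,i)` entry is
`x(1+x²)^{−1/2}`. -/
noncomputable def khat (n : ℕ) (i m : Fin n) (x : ℝ) : Matrix (Fin n) (Fin n) ℝ :=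
  Matrix.of fun a b =>
    if a = i ∧ b = i then (Real.sqrt (1 + x ^ 2))⁻¹
    else if a = m ∧ b = m then (Real.sqrt (1 + x ^ 2))⁻¹
    else if a = i ∧ b = m then -x * (Real.sqrt (1 + x ^ 2))⁻¹
    else if a = m ∧ b = i then x * (Real.sqrt (1 + x ^ 2))⁻¹
    else if a = b then 1 else 0

lemma transpose_stdBasisMatrix' {n : ℕ} (i j : Fin n) (c : ℝ) :
    (Matrix.single i j c).transpose = Matrix.single j i c := by
  ext a b
  simp [Matrix.single, and_comm]

lemma khat_decomp (n : ℕ) (i m : Fin n) (him : i ≠ m) (u : ℝ) :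
    khat n i m u = 1
      + Matrix.single i i ((Real.sqrt (1 + u ^ 2))⁻¹ - 1)
      + Matrix.single m m ((Real.sqrt (1 + u ^ 2))⁻¹ - 1)
      + Matrix.single i m (-u * (Real.sqrt (1 + u ^ 2))⁻¹)
      + Matrix.single m i (u * (Real.sqrt (1 + u ^ 2))⁻¹) := by
  ext a b
  by_cases h1 : a = i <;> by_cases h2 : a = m <;> by_cases h3 : b = i <;> by_cases h4 : b = m <;>
    simp_all [khat, Matrix.one_apply, Matrix.single, eq_comm]

lemma yhat_decomp (n : ℕ) (i m : Fin n) (him : i ≠ m) (u : ℝ) :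
    yhat n i m u = 1
      + Matrix.single i i ((Real.sqrt (1 + u ^ 2))⁻¹ - 1)
      + Matrix.single m m (Real.sqrt (1 + u ^ 2) - 1) := by
  ext a b
  by_cases h1 : a = i <;> by_cases h2 : a = m <;> by_cases h3 : b = i <;> by_cases h4 : b = m <;>
    simp_all [yhat, Matrix.one_apply, Matrix.diagonal, Matrix.single, eq_comm]

set_option maxRecDepth 8000 in
set_option maxHeartbeats 2000000 in
/-- For `n ≥ 2`, `1 ≤ i < n` (0-based: `(i:ℕ)+1 < n`) and `u ∈ ℝ`:
`I + u·E_{n,i} = (I + (u/(1+u²))·E_{i,n}) · ŷ_{n,i}(u) · k̂_{n,i}(u)`, and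
`k̂_{n,i}(u)` is orthogonal. -/
theorem stmt_3 (n : ℕ) (hn : 2 ≤ n) (i : Fin n) (hi : (i : ℕ) + 1 < n) (u : ℝ) :
    ((1 : Matrix (Fin n) (Fin n) ℝ)
        + Matrix.single ⟨n - 1, by omega⟩ i u
      = ((1 : Matrix (Fin n) (Fin n) ℝ)
          + Matrix.single i ⟨n - 1, by omega⟩ (u / (1 + u ^ 2)))
        * yhat n i ⟨n - 1, by omega⟩ u * khat n i ⟨n - 1, by omega⟩ u)
    ∧ (khat n i ⟨n - 1, by omega⟩ u).transpose * khat n i ⟨n - 1, by omega⟩ u = 1 := by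
  set m : Fin n := ⟨n - 1, by omega⟩ with hm
  have him : i ≠ m := by
    intro h
    have : (i : ℕ) = n - 1 := by rw [h]
    omega
  have h0 : (0:ℝ) < 1 + u ^ 2 := by positivity
  have hs0 : Real.sqrt (1 + u ^ 2) ≠ 0 := by positivity
  have hs : Real.sqrt (1 + u ^ 2) ^ 2 = 1 + u ^ 2 := Real.sq_sqrt h0.le
  have hs3 : Real.sqrt (1 + u ^ 2) ^ 3 = (1 + u ^ 2) * Real.sqrt (1 + u ^ 2) := by
    rw [pow_succ, hs]
  have hs4 : Real.sqrt (1 + u ^ 2) ^ 4 = (1 + u ^ 2) ^ 2 := by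
    rw [show (4:ℕ) = 2*2 from rfl, pow_mul, hs]
  constructor
  · rw [khat_decomp n i m him u, yhat_decomp n i m him u]
    simp only [Matrix.add_mul, Matrix.mul_add, Matrix.one_mul, Matrix.mul_one,
      Matrix.single_mul_single_same, Matrix.single_mul_single_of_ne, him, him.symm, ne_eq, not_false_eq_true]
    have him' : ¬ m = i := fun h => him h.symm
    ext a b
    by_cases h1 : i = a <;> by_cases h2 : m = a <;> by_cases h3 : i = b <;> by_cases h4 : m = b <;>
      simp_all [Matrix.one_apply, Matrix.single] <;>
      field_simp <;> ring_nf <;>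
      first
        | rfl
        | ring1
        | (simp only [hs4, hs3, hs]; ring1)
  · rw [khat_decomp n i m him u]
    simp only [Matrix.transpose_add, Matrix.transpose_one, transpose_stdBasisMatrix']
    simp only [Matrix.add_mul, Matrix.mul_add, Matrix.one_mul, Matrix.mul_one,
      Matrix.single_mul_single_same, Matrix.single_mul_single_of_ne, him, him.symm, ne_eq, not_false_eq_true]
    have him' : ¬ m = i := fun h => him h.symm
    ext a b
    by_cases h1 : i = a <;> by_cases h2 : m = a <;> by_cases h3 : i = b <;> by_cases h4 : m = b <;>
      simp_all [Matrix.one_apply, Matrix.single] <;>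
      field_simp <;> ring_nf <;>
      first
        | rfl
        | ring1
        | (simp only [hs4, hs3, hs] <;> ring1)
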